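/- Let δ ∈ (0,1) and define C = 1 − exp(−1/δ), n = ⌊(1 + 1/δ)·exp(1 + 1/δ)⌋, ρ = (1 − exp(−1 − 1/δ))/(1 − exp(−1/δ)) > 1, and the polynomial q_δ(z) = (Σ_{k=1}^{n} C^k/k)^{−1} · Σ_{k=1}^{n} (C z)^k / k. Then q_δ(0) = 0, q_δ(1) = 1, and for all z ∈ ℂ with |z| < ρ: the real part of q_δ(z) lies in the interval [−δ, 1 + 2δ] and the imaginary part satisfies |Im(q_δ(z))| ≤ 2δ. -/

import Mathlib

open Finset

/-- Tail bound for the Taylor series of `-log(1-w)` on a disc of radius `a < 1`. -/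
lemma barvinok_tail_bound (n : ℕ) (a : ℝ) (ha : a < 1) (w : ℂ) (hw : ‖w‖ ≤ a) :
    ‖(-Complex.log (1 - w)) - ∑ k ∈ Icc 1 n, w ^ k / (k : ℂ)‖
      ≤ a ^ (n + 1) / ((n + 1) * (1 - a)) := by
  have ha0 : 0 ≤ a := le_trans (norm_nonneg w) hw
  have hw1 : ‖w‖ < 1 := lt_of_le_of_lt hw ha
  have hs := Complex.hasSum_taylorSeries_neg_log hw1
  have hIcc : ∑ k ∈ Icc 1 n, w ^ k / (k : ℂ) = ∑ k ∈ range (n + 1), w ^ k / (k : ℂ) := by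
    apply Finset.sum_subset
    · intro k hk
      simp only [mem_Icc] at hk
      simp only [mem_range]
      omega
    · intro k hk hnk
      simp only [mem_range] at hk
      simp only [mem_Icc] at hnk
      have hk0 : k = 0 := by omega
      subst hk0
      simp
  rw [hIcc]
  have htail : HasSum (fun k : ℕ => w ^ (k + (n + 1)) / (((k + (n + 1) : ℕ)) : ℂ))
      (-Complex.log (1 - w) - ∑ i ∈ range (n + 1), w ^ i / (i : ℂ)) :=
    (hasSum_nat_add_iff' (f := fun k : ℕ => w ^ k / (k : ℂ)) (n + 1)).mpr hs
  have heq : -Complex.log (1 - w) - ∑ k ∈ range (n + 1), w ^ k / (k : ℂ)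
      = ∑' k : ℕ, w ^ (k + (n + 1)) / ((k + (n + 1) : ℕ) : ℂ) := htail.tsum_eq.symm
  rw [heq]
  have hgeom : HasSum (fun k : ℕ => a ^ (n + 1) / (n + 1) * a ^ k)
      (a ^ (n + 1) / (n + 1) * (1 - a)⁻¹) := by
    have := hasSum_geometric_of_lt_one ha0 ha
    exact this.mul_left _
  have hb : ∀ k : ℕ, ‖w ^ (k + (n + 1)) / ((k + (n + 1) : ℕ) : ℂ)‖
      ≤ a ^ (n + 1) / (n + 1) * a ^ k := by
    intro k
    rw [norm_div, norm_pow]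
    have h1 : ‖w‖ ^ (k + (n + 1)) ≤ a ^ (k + (n + 1)) :=
      pow_le_pow_left₀ (norm_nonneg w) hw _
    have h2 : ((n : ℝ) + 1) ≤ ‖((k + (n + 1) : ℕ) : ℂ)‖ := by
      rw [Complex.norm_natCast]
      push_cast
      linarith [Nat.cast_nonneg (α := ℝ) k]
    have h3 : (0 : ℝ) < (n : ℝ) + 1 := by positivity
    calc ‖w‖ ^ (k + (n + 1)) / ‖((k + (n + 1) : ℕ) : ℂ)‖
        ≤ a ^ (k + (n + 1)) / ((n : ℝ) + 1) := by
          apply div_le_div₀ (by positivity) h1 h3 h2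
      _ = a ^ (n + 1) / (n + 1) * a ^ k := by
          rw [pow_add]; push_cast; ring
  calc ‖∑' k : ℕ, w ^ (k + (n + 1)) / ((k + (n + 1) : ℕ) : ℂ)‖
      ≤ a ^ (n + 1) / (n + 1) * (1 - a)⁻¹ := tsum_of_norm_bounded hgeom hb
    _ = a ^ (n + 1) / ((n + 1) * (1 - a)) := by
        rw [eq_comm, div_eq_mul_inv, mul_inv]; push_cast; ring

set_option maxHeartbeats 2000000 in
/-- **Barvinok's explicit disc-to-strip polynomial (Lemma 2.2.3 of Barvinok).**
For `δ ∈ (0,1)`, with `C = 1 − e^{−1/δ}`, `n = ⌊(1 + 1/δ)e^{1+1/δ}⌋` and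
`ρ = (1 − e^{−1−1/δ})/(1 − e^{−1/δ}) > 1`, the polynomial
`q_δ(z) = (Σ_{k=1}^n C^k/k)⁻¹ Σ_{k=1}^n (Cz)^k/k` satisfies `q_δ(0)=0`, `q_δ(1)=1`, and
for all `|z| < ρ` one has `Re q_δ(z) ∈ [−δ, 1+2δ]` and `|Im q_δ(z)| ≤ 2δ`. -/
theorem barvinok_qdelta_properties
    (δ : ℝ) (hδ0 : 0 < δ) (hδ1 : δ < 1)
    (C : ℝ) (hC : C = 1 - Real.exp (-(1 / δ)))
    (n : ℕ) (hn : n = ⌊(1 + 1 / δ) * Real.exp (1 + 1 / δ)⌋₊)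
    (ρ : ℝ) (hρ : ρ = (1 - Real.exp (-1 - 1 / δ)) / (1 - Real.exp (-(1 / δ))))
    (q : ℂ → ℂ)
    (hq : ∀ z : ℂ, q z =
      (∑ k ∈ Icc 1 n, (C : ℂ) ^ k / (k : ℂ))⁻¹ * ∑ k ∈ Icc 1 n, ((C : ℂ) * z) ^ k / (k : ℂ)) :
    1 < ρ ∧ q 0 = 0 ∧ q 1 = 1 ∧
      ∀ z : ℂ, ‖z‖ < ρ →
        (q z).re ∈ Set.Icc (-δ) (1 + 2 * δ) ∧ |(q z).im| ≤ 2 * δ := by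
  have ht : (1:ℝ) < 1 / δ := one_lt_one_div hδ0 hδ1
  set t : ℝ := 1 / δ with htdef
  have htpos : (0:ℝ) < t := lt_trans one_pos ht
  have hδt : δ * t = 1 := by rw [htdef]; field_simp
  have hC0 : 0 < C := by
    rw [hC]
    have : Real.exp (-(1/δ)) < 1 := Real.exp_lt_one_iff.mpr (by linarith)
    linarith
  set a : ℝ := 1 - Real.exp (-1 - t) with hadef
  have haC : C < a := by
    rw [hC, hadef]
    have : Real.exp (-1 - t) < Real.exp (-(1/δ)) := Real.exp_lt_exp.mpr (by rw [← htdef]; linarith)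
    linarith
  have ha1 : a < 1 := by
    have := Real.exp_pos (-1 - t); rw [hadef]; linarith
  have ha0 : 0 < a := lt_trans hC0 haC
  have h1a : 1 - a = Real.exp (-1 - t) := by rw [hadef]; ring
  have hρa : ρ = a / C := by rw [hρ, ← hC, hadef, htdef]
  have hρ1 : 1 < ρ := by
    rw [hρa]
    exact (one_lt_div hC0).mpr haC
  -- facts about n
  have hn1 : 1 ≤ n := by
    rw [hn]
    apply Nat.le_floor
    have h1 : (1:ℝ) ≤ 1 + 1/δ := by linarith
    have h2 : (1:ℝ) ≤ Real.exp (1 + 1/δ) := Real.one_le_exp (by linarith)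
    push_cast
    nlinarith
  have hnlt : (1 + t) * Real.exp (1 + t) < (n:ℝ) + 1 := by
    have h := Nat.lt_floor_add_one ((1 + t) * Real.exp (1 + t))
    rw [← hn] at h
    exact_mod_cast h
  -- the sum S
  set S : ℝ := ∑ k ∈ Icc 1 n, C ^ k / k with hSdef
  have hScast : (∑ k ∈ Icc 1 n, (C : ℂ) ^ k / (k : ℂ)) = (S : ℂ) := by
    rw [hSdef]
    push_cast
    rfl
  -- the error bound E
  set E : ℝ := Real.exp (-1 - t) / (1 + t) with hEdef
  have hE0 : 0 < E := by rw [hEdef]; positivity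
  have hEb : a ^ (n + 1) / (((n:ℝ) + 1) * (1 - a)) ≤ E := by
    have hX : (1 + t) ≤ ((n:ℝ) + 1) * (1 - a) := by
      rw [h1a]
      have hmul : Real.exp (1 + t) * Real.exp (-1 - t) = 1 := by
        rw [← Real.exp_add]; norm_num
      have hep := Real.exp_pos (-1 - t)
      nlinarith
    have hXpos : (0:ℝ) < 1 + t := by linarith
    have hX0 : (0:ℝ) < ((n:ℝ) + 1) * (1 - a) := lt_of_lt_of_le hXpos hX
    have hpow : a ^ (n + 1) ≤ Real.exp (-(((n:ℝ) + 1) * (1 - a))) := by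
      have h1 : a ≤ Real.exp (a - 1) := by
        have := Real.add_one_le_exp (a - 1)
        linarith
      calc a ^ (n + 1) ≤ (Real.exp (a - 1)) ^ (n + 1) :=
            pow_le_pow_left₀ ha0.le h1 _
        _ = Real.exp (((n:ℝ) + 1) * (a - 1)) := by
            rw [← Real.exp_nat_mul]; push_cast; ring_nf
        _ = Real.exp (-(((n:ℝ) + 1) * (1 - a))) := by ring_nf
    calc a ^ (n + 1) / (((n:ℝ) + 1) * (1 - a))
        ≤ Real.exp (-(((n:ℝ) + 1) * (1 - a))) / (((n:ℝ) + 1) * (1 - a)) := by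
          gcongr
      _ ≤ Real.exp (-(1 + t)) / (1 + t) := by
          apply div_le_div₀ (Real.exp_pos _).le _ hXpos hX
          exact Real.exp_le_exp.mpr (by linarith)
      _ = E := by rw [hEdef]; ring_nf
  have hE07 : E ≤ 0.07 := by
    rw [hEdef]
    have h1 : Real.exp (-1 - t) ≤ Real.exp (-2) := Real.exp_le_exp.mpr (by linarith)
    have h2 : (2:ℝ) ≤ 1 + t := by linarith
    have he : (2.7182818283 : ℝ) < Real.exp 1 := Real.exp_one_gt_d9
    have hexp2 : (7.38 : ℝ) < Real.exp 2 := by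
      have h : Real.exp 2 = Real.exp 1 * Real.exp 1 := by
        rw [← Real.exp_add]; norm_num
      nlinarith
    have hinv : Real.exp (-2) * Real.exp 2 = 1 := by
      rw [← Real.exp_add]; norm_num
    have h3 : Real.exp (-2) < 0.136 := by
      nlinarith [Real.exp_pos (-2)]
    have h4 : Real.exp (-1 - t) / (1 + t) ≤ Real.exp (-2) / 2 :=
      div_le_div₀ (Real.exp_pos _).le h1 (by norm_num) h2
    nlinarith
  -- bound on S
  have hCa : ‖(C:ℂ)‖ ≤ a := by
    rw [Complex.norm_real, Real.norm_eq_abs, abs_of_pos hC0]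
    exact haC.le
  have hSC := barvinok_tail_bound n a ha1 (C:ℂ) hCa
  have hlogC : -Complex.log (1 - (C:ℂ)) = (t:ℂ) := by
    have h1 : (1:ℂ) - (C:ℂ) = ((Real.exp (-t) : ℝ) : ℂ) := by
      rw [hC, htdef]
      push_cast
      ring
    rw [h1, ← Complex.ofReal_log (Real.exp_pos _).le, Real.log_exp]
    push_cast
    ring
  have hSsum : (∑ k ∈ Icc 1 n, (C:ℂ) ^ k / (k : ℂ)) = (S : ℂ) := hScast
  have hStS : |t - S| ≤ E := by
    have : ‖(t:ℂ) - (S:ℂ)‖ ≤ a ^ (n+1) / (((n:ℝ)+1) * (1-a)) := by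
      rw [← hlogC, ← hSsum]
      exact hSC
    rw [← Complex.ofReal_sub, Complex.norm_real, Real.norm_eq_abs] at this
    exact this.trans hEb
  have hSge : t - E ≤ S := by
    have := abs_le.mp hStS
    linarith [this.2]
  have hSpos : 0 < S := by linarith
  refine ⟨hρ1, ?_, ?_, ?_⟩
  · -- q 0 = 0
    rw [hq]
    have : ∑ k ∈ Icc 1 n, ((C:ℂ) * 0) ^ k / (k : ℂ) = 0 := by
      apply Finset.sum_eq_zero
      intro k hk
      simp only [mem_Icc] at hk
      rw [mul_zero, zero_pow (by omega), zero_div]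
    rw [this, mul_zero]
  · -- q 1 = 1
    rw [hq]
    have h1 : ∑ k ∈ Icc 1 n, ((C:ℂ) * 1) ^ k / (k : ℂ) = ∑ k ∈ Icc 1 n, (C:ℂ) ^ k / (k : ℂ) := by
      simp
    rw [h1, hScast]
    exact inv_mul_cancel₀ (Complex.ofReal_ne_zero.mpr hSpos.ne')
  · -- main bound
    intro z hz
    set w : ℂ := (C:ℂ) * z with hwdef
    have hz' : ‖z‖ < ρ := by exact hz
    have hCρ : C * ρ = a := by
      rw [hρa, mul_comm, div_mul_cancel₀ a hC0.ne']
    have hwa : ‖w‖ ≤ a := by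
      rw [hwdef, norm_mul, Complex.norm_real, Real.norm_eq_abs, abs_of_pos hC0]
      have h2 : C * ‖z‖ < C * ρ := mul_lt_mul_of_pos_left hz' hC0
      linarith
    set L : ℂ := -Complex.log (1 - w) with hLdef
    set F : ℂ := ∑ k ∈ Icc 1 n, w ^ k / (k : ℂ) with hFdef
    have hLF : ‖L - F‖ ≤ E := (barvinok_tail_bound n a ha1 w hwa).trans hEb
    have hqz : q z = ((S⁻¹ : ℝ) : ℂ) * F := by
      rw [hq, hScast, hFdef, hwdef]
      push_cast
      ring
    -- bounds on L
    have habs_pos : 0 < ‖1 - w‖ := by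
      have h1 : 1 - a ≤ ‖1 - w‖ := by
        have := norm_sub_norm_le (1:ℂ) w
        rw [norm_one] at this
        calc 1 - a ≤ 1 - ‖w‖ := by linarith
          _ ≤ ‖1 - w‖ := this
      linarith [h1, (by rw [h1a]; exact Real.exp_pos _ : (0:ℝ) < 1 - a)]
    have habs1 : 1 - a ≤ ‖1 - w‖ := by
      have := norm_sub_norm_le (1:ℂ) w
      rw [norm_one] at this
      calc 1 - a ≤ 1 - ‖w‖ := by linarith
        _ ≤ ‖1 - w‖ := this
    have habs2 : ‖1 - w‖ ≤ 2 := by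
      have := norm_sub_le (1:ℂ) w
      rw [norm_one] at this
      calc ‖1 - w‖ ≤ 1 + ‖w‖ := this
        _ ≤ 2 := by linarith
    have hLre_ub : L.re ≤ 1 + t := by
      rw [hLdef, Complex.neg_re, Complex.log_re]
      have h1 : Real.log (1 - a) ≤ Real.log (‖1 - w‖) :=
        Real.log_le_log (by rw [h1a]; exact Real.exp_pos _) habs1
      rw [h1a, Real.log_exp] at h1
      linarith
    have hLre_lb : -Real.log 2 ≤ L.re := by
      rw [hLdef, Complex.neg_re, Complex.log_re]
      have h1 : Real.log (‖1 - w‖) ≤ Real.log 2 :=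
        Real.log_le_log habs_pos habs2
      linarith
    have hLim : |L.im| ≤ Real.pi / 2 := by
      rw [hLdef, Complex.neg_im, abs_neg, Complex.log_im]
      apply Complex.abs_arg_le_pi_div_two_iff.mpr
      rw [Complex.sub_re, Complex.one_re]
      have : w.re ≤ ‖w‖ := Complex.re_le_norm w
      linarith [hwa, ha1]
    -- error parts
    have hRre : |(L - F).re| ≤ E := (Complex.abs_re_le_norm _).trans hLF
    have hRim : |(L - F).im| ≤ E := (Complex.abs_im_le_norm _).trans hLF
    have hFre_ub : F.re ≤ 1 + t + E := by
      have h1 : F.re = L.re - (L - F).re := by simp [Complex.sub_re]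
      have := abs_le.mp hRre
      linarith [this.1]
    have hFre_lb : -Real.log 2 - E ≤ F.re := by
      have h1 : F.re = L.re - (L - F).re := by simp [Complex.sub_re]
      have := abs_le.mp hRre
      linarith [this.2]
    have hFim : |F.im| ≤ Real.pi / 2 + E := by
      have h1 : F.im = L.im - (L - F).im := by simp [Complex.sub_im]
      rw [h1]
      calc |L.im - (L - F).im| ≤ |L.im| + |(L - F).im| := abs_sub _ _
        _ ≤ Real.pi / 2 + E := add_le_add hLim hRim
    have hqre : (q z).re = S⁻¹ * F.re := by
      rw [hqz, Complex.re_ofReal_mul]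
    have hqim : (q z).im = S⁻¹ * F.im := by
      rw [hqz, Complex.im_ofReal_mul]
    have hlog2 : Real.log 2 < 0.6931471808 := Real.log_two_lt_d9
    have hlog2pos : 0 < Real.log 2 := Real.log_pos (by norm_num)
    have hpi : Real.pi < 3.15 := by
      have := Real.pi_lt_d2
      linarith
    have hpipos : 0 < Real.pi := Real.pi_pos
    have hδE : δ * E ≤ E := by
      have h := mul_le_mul_of_nonneg_right hδ1.le hE0.le
      linarith
    have hδS : 1 - E ≤ δ * S := by
      have h1 : δ * (t - E) ≤ δ * S := mul_le_mul_of_nonneg_left hSge hδ0.le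
      have h2 : δ * (t - E) = δ * t - δ * E := by ring
      linarith
    constructor
    · constructor
      · -- lower bound on re
        rw [hqre, inv_mul_eq_div, le_div_iff₀ hSpos]
        have h5 : -(δ * S) ≤ F.re := by linarith
        linarith [h5]
      · -- upper bound on re
        rw [hqre, inv_mul_eq_div, div_le_iff₀ hSpos]
        have h2 : (1 + 2 * δ) * (t - E) ≤ (1 + 2 * δ) * S :=
          mul_le_mul_of_nonneg_left hSge (by linarith)
        have h4 : (1 + 2 * δ) * (t - E) = t - E + 2 * (δ * t) - 2 * (δ * E) := by ring
        rw [hδt] at h4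
        linarith
    · rw [hqim, inv_mul_eq_div, abs_div, abs_of_pos hSpos, div_le_iff₀ hSpos]
      have key : Real.pi / 2 + E ≤ 2 * δ * S := by linarith
      have h3 := abs_le.mp hFim
      rw [abs_le]
      constructor <;> linarith [h3.1, h3.2]
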